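/- Let T be a triangulated category with Serre functor ν, d ≥ 1, and P a d-silting subcategory of T. Then the subcategory U_d(P) := add{ν_d^i(P) : i ∈ ℤ, P ∈ P} is d-rigid, i.e., Hom_T(U_d(P), U_d(P)[j]) = 0 for all 1 ≤ j ≤ d−1. -/

import Mathlib

/-!
STATEMENT 7: If P is a d-silting subcategory of a k-linear Hom-finite triangulated
category T with Serre functor ν (i.e. P is silting and Hom(ν_d^j(P), P[i]) = 0 for
all i, j ≥ 1), then U_d(P) = add{ν_d^i(P) : i ∈ ℤ, P ∈ P} is d-rigid.
-/

open CategoryTheory CategoryTheory.Limits CategoryTheory.Pretriangulated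

universe w v u

variable (k : Type w) [Field k]
variable (C : Type u) [Category.{v} C] [Preadditive C] [Linear k C] [HasZeroObject C]
  [HasShift C ℤ] [∀ n : ℤ, (CategoryTheory.shiftFunctor C n).Additive] [Pretriangulated C]
  [HasBinaryBiproducts C]

/-- A Serre functor on a k-linear category: an (additive) autoequivalence ν together
with functorial isomorphisms D Hom(X,Y) ≅ Hom(Y, νX). -/
structure SerreFunctor : Type (max (max u v) w) where
  ν : C ≌ C
  additive : ν.functor.Additive
  duality : ∀ X Y : C, (Y ⟶ ν.functor.obj X) ≃ₗ[k] Module.Dual k (X ⟶ Y)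
  natural : ∀ (X Y X' Y' : C) (a : X ⟶ X') (b : Y' ⟶ Y) (f : Y ⟶ ν.functor.obj X),
    duality X' Y' (b ≫ f ≫ ν.functor.map a) = fun g => duality X Y f (a ≫ g ≫ b)

variable {k C}

/-- ν_d = ν ∘ [-d]. -/
def nud (S : SerreFunctor k C) (d : ℕ) : C ⥤ C :=
  CategoryTheory.shiftFunctor C (-(d : ℤ)) ⋙ S.ν.functor

/-- The inverse of ν_d. -/
def nudInv (S : SerreFunctor k C) (d : ℕ) : C ⥤ C :=
  S.ν.inverse ⋙ CategoryTheory.shiftFunctor C (d : ℤ)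


/-- Iteration of an endofunctor. -/
def iterObj (F : C ⥤ C) : ℕ → C → C
  | 0, X => X
  | n + 1, X => F.obj (iterObj F n X)

/-- A thick subcategory: closed under isomorphisms, shifts, extensions and
direct summands. -/
structure IsThick (Z : Set C) : Prop where
  iso : ∀ {X Y : C}, (X ≅ Y) → X ∈ Z → Y ∈ Z
  shift : ∀ X ∈ Z, ∀ n : ℤ, X⟦n⟧ ∈ Z
  ext₂ : ∀ T ∈ distTriang C, T.obj₁ ∈ Z → T.obj₃ ∈ Z → T.obj₂ ∈ Z
  summand : ∀ X Y : C, [HasBinaryBiproduct X Y] → (X ⊞ Y) ∈ Z → X ∈ Z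

/-- `S` generates `C` as a thick subcategory: `thick S = C`. -/
def GeneratesThick (S : Set C) : Prop :=
  ∀ Z : Set C, IsThick Z → S ⊆ Z → ∀ X : C, X ∈ Z

/-- A presilting subcategory: Hom(P, P[i]) = 0 for all i ≥ 1. -/
def IsPresiltingSet (P : Set C) : Prop :=
  ∀ A ∈ P, ∀ B ∈ P, ∀ i : ℤ, 1 ≤ i → ∀ f : A ⟶ B⟦i⟧, f = 0

/-- A silting subcategory: presilting and generating C as a thick subcategory. -/
def IsSiltingSet (P : Set C) : Prop := IsPresiltingSet P ∧ GeneratesThick P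

/-- The coaisle T_{≥0}^P = ^⊥(P[>0]) of the co-t-structure associated to P. -/
def coAisleGE (P : Set C) : Set C :=
  {X | ∀ A ∈ P, ∀ i : ℤ, 1 ≤ i → ∀ f : X ⟶ A⟦i⟧, f = 0}

/-- The aisle T_{≤0}^P = (P[<0])^⊥ of the co-t-structure associated to P. -/
def coAisleLE (P : Set C) : Set C :=
  {X | ∀ A ∈ P, ∀ i : ℤ, 1 ≤ i → ∀ f : A⟦-i⟧ ⟶ X, f = 0}


/-- Objects obtained as finite direct sums of objects of `S`. -/
inductive sums (S : Set C) : C → Prop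
  | of {X : C} : X ∈ S → sums S X
  | biprod {X Y : C} : sums S X → sums S Y → sums S (X ⊞ Y)

/-- The additive closure `add S`. -/
def addSet (S : Set C) : Set C :=
  {X | ∃ Y Z : C, sums S Y ∧ Nonempty (Y ≅ X ⊞ Z)}

/-- The ν_d-orbit of an object (closed under isomorphism). -/
def nudOrbit (S : SerreFunctor k C) (d : ℕ) (X : C) : Set C :=
  {Y | ∃ n : ℕ, Nonempty (Y ≅ iterObj (nud S d) n X) ∨
    Nonempty (Y ≅ iterObj (nudInv S d) n X)}

/-- U_d(P) = add { ν_d^i(A) : i ∈ ℤ, A ∈ P }. -/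
def UdSet (S : SerreFunctor k C) (d : ℕ) (P : Set C) : Set C :=
  addSet (⋃ A ∈ P, nudOrbit S d A)


section Aux

/-- `∀ f = 0` is the same as the hom-type being a subsingleton. -/
lemma homZero_iff {X Y : C} : (∀ f : X ⟶ Y, f = 0) ↔ Subsingleton (X ⟶ Y) :=
  ⟨fun h => ⟨fun a b => by rw [h a, h b]⟩, fun h f => @Subsingleton.elim _ h f 0⟩

lemma sub_congr {X Y X' Y' : C} (e₁ : X ≅ X') (e₂ : Y ≅ Y') :
    Subsingleton (X ⟶ Y) ↔ Subsingleton (X' ⟶ Y') :=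
  (e₁.homCongr e₂).subsingleton_congr

lemma sub_shift (a : ℤ) (X Y : C) :
    Subsingleton (X ⟶ Y) ↔ Subsingleton (X⟦a⟧ ⟶ Y⟦a⟧) := by
  constructor
  · intro h
    constructor
    intro f g
    obtain ⟨f', rfl⟩ := (shiftFunctor C a).map_surjective f
    obtain ⟨g', rfl⟩ := (shiftFunctor C a).map_surjective g
    rw [@Subsingleton.elim _ h f' g']
  · intro h
    constructor
    intro f g
    exact (shiftFunctor C a).map_injective (@Subsingleton.elim _ h _ _)

lemma dual_sub (M : Type*) [AddCommGroup M] [Module k M] :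
    Subsingleton (Module.Dual k M) ↔ Subsingleton M := by
  constructor
  · intro h
    constructor
    intro a b
    have ha : ∀ v : M, v = 0 := fun v =>
      (Module.forall_dual_apply_eq_zero_iff k v).mp
        (fun φ => by rw [@Subsingleton.elim _ h φ 0]; rfl)
    rw [ha a, ha b]
  · intro h
    constructor
    intro φ ψ
    ext v
    rw [@Subsingleton.elim _ h v 0, map_zero, map_zero]

/-- The Serre-duality step: `Hom(Y, X[d-i]) = 0 ↔ Hom(X, (ν_d Y)[i]) = 0`. -/
lemma DL (S : SerreFunctor k C) (d : ℕ) (X Y : C) (i : ℤ) :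
    Subsingleton (Y ⟶ X⟦(d : ℤ) - i⟧) ↔ Subsingleton (X ⟶ ((nud S d).obj Y)⟦i⟧) := by
  have e1 : Subsingleton (X ⟶ ((nud S d).obj Y)⟦i⟧) ↔
      Subsingleton (X⟦-i⟧ ⟶ (nud S d).obj Y) :=
    (sub_shift (-i) _ _).trans
      (sub_congr (Iso.refl _) ((shiftFunctorCompIsoId C i (-i) (by ring)).app _))
  have e2 : Subsingleton (X⟦-i⟧ ⟶ (nud S d).obj Y) ↔
      Subsingleton (Module.Dual k (Y⟦-(d : ℤ)⟧ ⟶ X⟦-i⟧)) :=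
    (S.duality (Y⟦-(d : ℤ)⟧) (X⟦-i⟧)).toEquiv.subsingleton_congr
  have e3 : Subsingleton (Module.Dual k (Y⟦-(d : ℤ)⟧ ⟶ X⟦-i⟧)) ↔
      Subsingleton (Y⟦-(d : ℤ)⟧ ⟶ X⟦-i⟧) := dual_sub _
  have e4 : Subsingleton (Y⟦-(d : ℤ)⟧ ⟶ X⟦-i⟧) ↔
      Subsingleton (Y ⟶ X⟦(d : ℤ) - i⟧) :=
    (sub_shift (d : ℤ) _ _).trans
      (sub_congr ((shiftFunctorCompIsoId C (-(d : ℤ)) (d : ℤ) (by ring)).app Y)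
        (((shiftFunctorAdd' C (-i) (d : ℤ) ((d : ℤ) - i) (by ring)).app X).symm))
  exact (e4.symm.trans e3.symm).trans (e2.symm.trans e1.symm)

/-- `ν_d` powers (ℤ-indexed). -/
def powObj (S : SerreFunctor k C) (d : ℕ) (n : ℤ) (X : C) : C :=
  if 0 ≤ n then iterObj (nud S d) n.toNat X else iterObj (nudInv S d) (-n).toNat X

lemma powObj_natCast (S : SerreFunctor k C) (d : ℕ) (n : ℕ) (X : C) :
    powObj S d (n : ℤ) X = iterObj (nud S d) n X := by
  simp [powObj]

lemma powObj_negCast (S : SerreFunctor k C) (d : ℕ) (n : ℕ) (X : C) :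
    powObj S d (-(n : ℤ)) X = iterObj (nudInv S d) n X := by
  rcases Nat.eq_zero_or_pos n with h | h
  · subst h
    simp [powObj, iterObj]
  · have h0 : ¬ (0 : ℤ) ≤ -(n : ℤ) := by omega
    simp [powObj, h0, h.ne']

/-- counit iso for the `(nud, nudInv)` pair. -/
def nudCounit (S : SerreFunctor k C) (d : ℕ) (Z : C) :
    (nud S d).obj ((nudInv S d).obj Z) ≅ Z :=
  S.ν.functor.mapIso
      ((shiftFunctorCompIsoId C (d : ℤ) (-(d : ℤ)) (by ring)).app (S.ν.inverse.obj Z)) ≪≫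
    S.ν.counitIso.app Z

lemma powSucc (S : SerreFunctor k C) (d : ℕ) (n : ℤ) (X : C) :
    Nonempty (powObj S d (n + 1) X ≅ (nud S d).obj (powObj S d n X)) := by
  rcases n with m | m
  · refine ⟨eqToIso ?_⟩
    have h1 : (Int.ofNat m) + 1 = ((m + 1 : ℕ) : ℤ) := by simp
    have h2 : (Int.ofNat m) = ((m : ℕ) : ℤ) := rfl
    rw [h1, h2, powObj_natCast, powObj_natCast]
    rfl
  · rcases Nat.eq_zero_or_pos m with h | h
    · subst h
      have h1 : (Int.negSucc 0) + 1 = ((0 : ℕ) : ℤ) := by decide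
      have h2 : (Int.negSucc 0) = -((1 : ℕ) : ℤ) := by decide
      rw [h1, h2, powObj_natCast, powObj_negCast]
      exact ⟨(nudCounit S d X).symm⟩
    · have h1 : (Int.negSucc m) + 1 = -((m : ℕ) : ℤ) := by
        rw [Int.negSucc_eq]; push_cast; ring
      have h2 : (Int.negSucc m) = -((m + 1 : ℕ) : ℤ) := by
        rw [Int.negSucc_eq]; push_cast; ring
      rw [h1, h2, powObj_negCast, powObj_negCast]
      exact ⟨(nudCounit S d (iterObj (nudInv S d) m X)).symm⟩

/-- The key vanishing predicate between `ν_d` powers of objects of `P`. -/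
def Wprop (S : SerreFunctor k C) (d : ℕ) (P : Set C) (m n : ℤ) : Prop :=
  ∀ A ∈ P, ∀ B ∈ P, ∀ i : ℤ, 1 ≤ i → i ≤ (d : ℤ) - 1 →
    Subsingleton (powObj S d m A ⟶ (powObj S d n B)⟦i⟧)

lemma W_step (S : SerreFunctor k C) (d : ℕ) (m n : ℤ) (A B : C) (i : ℤ) :
    Subsingleton (powObj S d m A ⟶ (powObj S d n B)⟦i⟧) ↔
    Subsingleton (powObj S d (n - 1) B ⟶ (powObj S d m A)⟦(d : ℤ) - i⟧) := by
  obtain ⟨e⟩ := powSucc S d (n - 1) B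
  rw [sub_add_cancel] at e
  exact (sub_congr (Iso.refl _) ((shiftFunctor C i).mapIso e)).trans
    (DL S d (powObj S d m A) (powObj S d (n - 1) B) i).symm

lemma W_flip (S : SerreFunctor k C) (d : ℕ) (P : Set C) (m n : ℤ) :
    Wprop S d P m n ↔ Wprop S d P (n - 1) m := by
  constructor
  · intro h A hA B hB i h1 h2
    have := (W_step S d m n B A ((d : ℤ) - i)).mp
      (h B hB A hA ((d : ℤ) - i) (by omega) (by omega))
    have hi : (d : ℤ) - ((d : ℤ) - i) = i := by ring
    rwa [hi] at this
  · intro h A hA B hB i h1 h2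
    exact (W_step S d m n A B i).mpr
      (h B hB A hA ((d : ℤ) - i) (by omega) (by omega))

lemma W_shift2 (S : SerreFunctor k C) (d : ℕ) (P : Set C) (m n : ℤ) :
    Wprop S d P m n ↔ Wprop S d P (m - 1) (n - 1) :=
  (W_flip S d P m n).trans (W_flip S d P (n - 1) m)

lemma W_shiftK (S : SerreFunctor k C) (d : ℕ) (P : Set C) (j : ℤ) (m n : ℤ) :
    Wprop S d P m n ↔ Wprop S d P (m + j) (n + j) := by
  induction j using Int.induction_on with
  | zero => simp
  | succ k ih =>
      refine ih.trans ?_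
      have := (W_shift2 S d P (m + (k + 1)) (n + (k + 1))).symm
      have e1 : m + (k + 1) - 1 = m + k := by ring
      have e2 : n + (k + 1) - 1 = n + k := by ring
      rwa [e1, e2] at this
  | pred k ih =>
      refine ih.trans ?_
      have := W_shift2 S d P (m + -(k : ℤ)) (n + -(k : ℤ))
      have e1 : m + -(k : ℤ) - 1 = m + (-(k : ℤ) - 1) := by ring
      have e2 : n + -(k : ℤ) - 1 = n + (-(k : ℤ) - 1) := by ring
      rwa [e1, e2] at this

lemma W_base (S : SerreFunctor k C) (d : ℕ) (P : Set C) (hsilt : IsSiltingSet P)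
    (hdsilt : ∀ A ∈ P, ∀ B ∈ P, ∀ i j : ℕ, 1 ≤ i → 1 ≤ j →
      ∀ f : iterObj (nud S d) j A ⟶ B⟦(i : ℤ)⟧, f = 0)
    (j : ℤ) (hj : 0 ≤ j) : Wprop S d P j 0 := by
  intro A hA B hB i h1 h2
  obtain ⟨jn, rfl⟩ := Int.eq_ofNat_of_zero_le hj
  obtain ⟨inn, rfl⟩ := Int.eq_ofNat_of_zero_le (show (0 : ℤ) ≤ i by omega)
  have hB0 : powObj S d 0 B = B := powObj_natCast S d 0 B
  rw [hB0, powObj_natCast, ← homZero_iff]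
  rcases Nat.eq_zero_or_pos jn with h0 | h0
  · subst h0
    intro f
    exact hsilt.1 A hA B hB (inn : ℤ) h1 f
  · intro f
    exact hdsilt A hA B hB inn jn (by exact_mod_cast h1) h0 f

lemma W_all [∀ X Y : C, FiniteDimensional k (X ⟶ Y)]
    (S : SerreFunctor k C) (d : ℕ) (P : Set C) (hsilt : IsSiltingSet P)
    (hdsilt : ∀ A ∈ P, ∀ B ∈ P, ∀ i j : ℕ, 1 ≤ i → 1 ≤ j →
      ∀ f : iterObj (nud S d) j A ⟶ B⟦(i : ℤ)⟧, f = 0)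
    (m n : ℤ) : Wprop S d P m n := by
  have base : ∀ j : ℤ, Wprop S d P j 0 := by
    intro j
    rcases le_or_gt 0 j with hj | hj
    · exact W_base S d P hsilt hdsilt j hj
    · -- W j 0 ← W (-1) j ← W (-1-j) 0
      have h1 : Wprop S d P (-1 - j) 0 := W_base S d P hsilt hdsilt _ (by omega)
      have h2 := (W_shiftK S d P j (-1 - j) 0).mp h1
      have e1 : (-1 - j) + j = -1 := by ring
      have e2 : (0 : ℤ) + j = j := by ring
      rw [e1, e2] at h2
      have h3 := (W_flip S d P j 0).mpr
      have e3 : (0 : ℤ) - 1 = -1 := by ring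
      rw [e3] at h3
      exact h3 h2
  have := (W_shiftK S d P n (m - n) 0).mp (base (m - n))
  have e1 : (m - n) + n = m := by ring
  have e2 : (0 : ℤ) + n = n := by ring
  rwa [e1, e2] at this

/-- The rigidity predicate. -/
def GoodPair (d : ℕ) (X Y : C) : Prop :=
  ∀ i : ℤ, 1 ≤ i → i ≤ (d : ℤ) - 1 → ∀ f : X ⟶ Y⟦i⟧, f = 0

lemma good_iso {d : ℕ} {X X' Y Y' : C} (e₁ : X ≅ X') (e₂ : Y ≅ Y')
    (h : GoodPair d X Y) : GoodPair d X' Y' := by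
  intro i h1 h2 f
  have hz : e₁.hom ≫ f ≫ (shiftFunctor C i).map e₂.inv = 0 := h i h1 h2 _
  have : f = e₁.inv ≫ (e₁.hom ≫ f ≫ (shiftFunctor C i).map e₂.inv) ≫
      (shiftFunctor C i).map e₂.hom := by
    simp [← Functor.map_comp]
  rw [this, hz]
  simp

lemma good_retract {d : ℕ} {X X' Y Y' : C}
    (ι : X ⟶ X') (π : X' ⟶ X) (hιπ : ι ≫ π = 𝟙 X)
    (ι' : Y ⟶ Y') (π' : Y' ⟶ Y) (hιπ' : ι' ≫ π' = 𝟙 Y)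
    (h : GoodPair d X' Y') : GoodPair d X Y := by
  intro i h1 h2 f
  have hz : π ≫ f ≫ (shiftFunctor C i).map ι' = 0 := h i h1 h2 _
  have : f = ι ≫ (π ≫ f ≫ (shiftFunctor C i).map ι') ≫ (shiftFunctor C i).map π' := by
    rw [← Category.assoc, ← Category.assoc]
    rw [Category.assoc (ι ≫ π)]
    rw [hιπ, Category.assoc, ← Functor.map_comp, hιπ']
    simp
  rw [this, hz]
  simp

lemma good_biprod_left {d : ℕ} {X Z Y : C}
    (hX : GoodPair d X Y) (hZ : GoodPair d Z Y) : GoodPair d (X ⊞ Z) Y := by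
  intro i h1 h2 f
  apply biprod.hom_ext' <;> simp [hX i h1 h2 _, hZ i h1 h2 _]

lemma good_biprod_right {d : ℕ} {X Y Z : C}
    (hY : GoodPair d X Y) (hZ : GoodPair d X Z) : GoodPair d X (Y ⊞ Z) := by
  intro i h1 h2 f
  have t1 : f ≫ (shiftFunctor C i).map biprod.fst = 0 := hY i h1 h2 _
  have t2 : f ≫ (shiftFunctor C i).map biprod.snd = 0 := hZ i h1 h2 _
  have : f = f ≫ (shiftFunctor C i).map (𝟙 (Y ⊞ Z)) := by simp
  rw [this, ← biprod.total, Functor.map_add, Preadditive.comp_add,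
    Functor.map_comp, Functor.map_comp, ← Category.assoc, ← Category.assoc, t1, t2]
  simp

end Aux

theorem statement_7 [∀ X Y : C, FiniteDimensional k (X ⟶ Y)]
    (S : SerreFunctor k C) (d : ℕ) (hd : 1 ≤ d)
    (P : Set C) (hsilt : IsSiltingSet P)
    (hdsilt : ∀ A ∈ P, ∀ B ∈ P, ∀ i j : ℕ, 1 ≤ i → 1 ≤ j →
      ∀ f : iterObj (nud S d) j A ⟶ B⟦(i : ℤ)⟧, f = 0) :
    ∀ X ∈ UdSet S d P, ∀ Y ∈ UdSet S d P, ∀ i : ℤ, 1 ≤ i → i ≤ (d : ℤ) - 1 →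
      ∀ f : X ⟶ Y⟦i⟧, f = 0 := by
  have hgen : ∀ U ∈ (⋃ A ∈ P, nudOrbit S d A), ∀ V ∈ (⋃ A ∈ P, nudOrbit S d A),
      GoodPair d U V := by
    intro U hU V hV
    simp only [Set.mem_iUnion] at hU hV
    obtain ⟨A, hA, mU, hUo⟩ := hU
    obtain ⟨B, hB, mV, hVo⟩ := hV
    have hU' : ∃ m : ℤ, Nonempty (U ≅ powObj S d m A) := by
      rcases hUo with h | h <;> obtain ⟨e⟩ := h
      · exact ⟨(mU : ℤ), ⟨e.trans (eqToIso (powObj_natCast S d mU A).symm)⟩⟩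
      · exact ⟨-(mU : ℤ), ⟨e.trans (eqToIso (powObj_negCast S d mU A).symm)⟩⟩
    have hV' : ∃ m : ℤ, Nonempty (V ≅ powObj S d m B) := by
      rcases hVo with h | h <;> obtain ⟨e⟩ := h
      · exact ⟨(mV : ℤ), ⟨e.trans (eqToIso (powObj_natCast S d mV B).symm)⟩⟩
      · exact ⟨-(mV : ℤ), ⟨e.trans (eqToIso (powObj_negCast S d mV B).symm)⟩⟩
    obtain ⟨m, ⟨eU⟩⟩ := hU'
    obtain ⟨n, ⟨eV⟩⟩ := hV'
    intro i h1 h2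
    rw [homZero_iff, sub_congr eU ((shiftFunctor C i).mapIso eV)]
    exact W_all S d P hsilt hdsilt m n A hA B hB i h1 h2
  have hsums : ∀ U, sums (⋃ A ∈ P, nudOrbit S d A) U →
      ∀ V, sums (⋃ A ∈ P, nudOrbit S d A) V → GoodPair d U V := by
    intro U hU
    induction hU with
    | of h =>
      intro V hV
      induction hV with
      | of h' => exact hgen _ h _ h'
      | biprod _ _ ih1 ih2 => exact good_biprod_right ih1 ih2
    | biprod _ _ ih1 ih2 =>
      intro V hV
      exact good_biprod_left (ih1 V hV) (ih2 V hV)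
  intro X hX Y hY i h1 h2 f
  obtain ⟨U, Z, hU, ⟨e⟩⟩ := hX
  obtain ⟨V, Z', hV, ⟨e'⟩⟩ := hY
  have g2 : GoodPair d (X ⊞ Z) (Y ⊞ Z') := good_iso e e' (hsums U hU V hV)
  have g3 : GoodPair d X Y :=
    good_retract biprod.inl biprod.fst (by simp) biprod.inl biprod.fst (by simp) g2
  exact g3 i h1 h2 f
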